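/- arXiv:2401.05805 — 2 statements merged into one kernel-verified Lean document; each statement's English description precedes it below -/
import Mathlib

section
/- Let n be a natural number, L a set of primes, and G a closed subgroup of the product ∏_{ℓ∈L} GL_n(ℤ_ℓ). If G is group-theoretically independent, i.e. for all distinct ℓ₁, ℓ₂ ∈ L no finite simple group is, up to isomorphism, a continuous finite simple quotient of both pr_{ℓ₁}(G) and pr_{ℓ₂}(G), then G is independent, i.e. G = ∏_{ℓ∈L} pr_ℓ(G). -/
open Matrix

instance (p : Nat.Primes) : Fact (p : ℕ).Prime := ⟨p.2⟩

/-- `S` is a continuous finite simple quotient of the topological group `H`: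
there is a continuous surjective group homomorphism from `H` onto `S`,
where `S` carries the discrete topology. -/
def IsContinuousQuotient (H : Type*) [Group H] [TopologicalSpace H]
    (S : Type*) [Group S] : Prop :=
  ∃ f : H →* S, Function.Surjective f ∧ @Continuous H S _ ⊥ f

section Instances

instance matrix_cpt {m n R : Type*} [TopologicalSpace R] [CompactSpace R] :
    CompactSpace (Matrix m n R) := inferInstanceAs (CompactSpace (m → n → R))

instance matrix_td {m n R : Type*} [TopologicalSpace R] [TotallyDisconnectedSpace R] :
    TotallyDisconnectedSpace (Matrix m n R) :=
  inferInstanceAs (TotallyDisconnectedSpace (m → n → R))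

variable {M : Type*} [Monoid M] [TopologicalSpace M] [T2Space M] [ContinuousMul M]

instance mulOpp_cpt [CompactSpace M] : CompactSpace Mᵐᵒᵖ :=
  MulOpposite.opHomeomorph.compactSpace

instance mulOpp_td [TotallyDisconnectedSpace M] : TotallyDisconnectedSpace Mᵐᵒᵖ := by
  rw [← MulOpposite.opHomeomorph.symm.isEmbedding.isTotallyDisconnected_range]
  exact isTotallyDisconnected_of_totallyDisconnectedSpace _

theorem units_isClosedEmbedding (M : Type*) [Monoid M] [TopologicalSpace M] [T2Space M]
    [ContinuousMul M] : Topology.IsClosedEmbedding (Units.embedProduct M) := by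
  refine ⟨Units.isEmbedding_embedProduct, ?_⟩
  have : Set.range (Units.embedProduct M) =
      {x : M × Mᵐᵒᵖ | x.1 * x.2.unop = 1 ∧ x.2.unop * x.1 = 1} := by
    ext x
    simp only [Set.mem_range, Set.mem_setOf_eq]
    constructor
    · rintro ⟨u, rfl⟩
      exact ⟨u.mul_inv, u.inv_mul⟩
    · rintro ⟨h1, h2⟩
      exact ⟨⟨x.1, x.2.unop, h1, h2⟩, Prod.ext rfl (MulOpposite.op_unop _)⟩
  rw [this]
  apply IsClosed.inter
  · exact isClosed_eq (by continuity) continuous_const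
  · exact isClosed_eq (by continuity) continuous_const

instance units_compact [CompactSpace M] : CompactSpace Mˣ :=
  (units_isClosedEmbedding M).compactSpace

instance units_td [TotallyDisconnectedSpace M] : TotallyDisconnectedSpace Mˣ := by
  rw [← Units.isEmbedding_embedProduct.isTotallyDisconnected_range]
  exact isTotallyDisconnected_of_totallyDisconnectedSpace _

end Instances

/-- Every nontrivial finite group has a finite simple quotient. -/
theorem exists_simple_quotient :
    ∀ (k : ℕ) (Q : Type) [Group Q] [Finite Q] [Nontrivial Q], Nat.card Q ≤ k →
    ∃ (S : Type) (instS : Group S), ∃ (_ : Finite S) (_ : IsSimpleGroup S),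
      ∃ σ : Q →* S, Function.Surjective σ := by
  intro k
  induction k with
  | zero =>
    intro Q _ _ _ h
    have h1 : 0 < Nat.card Q := Nat.card_pos
    omega
  | succ k ih =>
    intro Q _ _ _ hk
    by_cases hs : IsSimpleGroup Q
    · exact ⟨Q, ‹_›, ‹_›, hs, MonoidHom.id Q, Function.surjective_id⟩
    · have hN : ∃ N : Subgroup Q, N.Normal ∧ N ≠ ⊥ ∧ N ≠ ⊤ := by
        by_contra h
        push_neg at h
        exact hs ⟨fun N hn => or_iff_not_imp_left.mpr (h N hn)⟩
      obtain ⟨N, hNnormal, hNbot, hNtop⟩ := hN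
      haveI := hNnormal
      obtain ⟨q, hq⟩ : ∃ q : Q, q ∉ N := by
        by_contra h
        push_neg at h
        exact hNtop ((Subgroup.eq_top_iff' N).mpr h)
      haveI : Nontrivial (Q ⧸ N) :=
        ⟨⟨QuotientGroup.mk q, 1, by simpa [QuotientGroup.eq_one_iff] using hq⟩⟩
      haveI : Finite (Q ⧸ N) := Quotient.finite _
      have hcard : Nat.card (Q ⧸ N) ≤ k := by
        have h1 : Nat.card Q = Nat.card (Q ⧸ N) * Nat.card N :=
          Subgroup.card_eq_card_quotient_mul_card_subgroup N
        haveI : Nontrivial N := (Subgroup.nontrivial_iff_ne_bot N).mpr hNbot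
        have h2 : 2 ≤ Nat.card N := Finite.one_lt_card
        have h3 : 0 < Nat.card (Q ⧸ N) := Nat.card_pos
        nlinarith
      obtain ⟨S, instS, instF, instSimp, σ, hσ⟩ := ih (Q ⧸ N) hcard
      exact ⟨S, instS, instF, instSimp, σ.comp (QuotientGroup.mk' N),
        hσ.comp (QuotientGroup.mk'_surjective N)⟩

/-- The key group-theoretic lemma: if `Γ` surjects onto each finite group `Q i` and no
two distinct `Q i`, `Q j` have a common finite simple quotient, then `Γ` surjects onto
the product of the `Q i` over any finite set of indices. -/
theorem key {Γ : Type*} [Group Γ] {ι : Type*} {Q : ι → Type} [∀ i, Group (Q i)]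
    [∀ i, Finite (Q i)]
    (φ : ∀ i, Γ →* Q i) (hφ : ∀ i, Function.Surjective (φ i))
    (hnc : ∀ i j : ι, i ≠ j → ∀ (S : Type) (instS : Group S),
      ∀ (_ : Finite S) (_ : @IsSimpleGroup S instS)
        (f : @MonoidHom (Q i) S _ (@MulOneClass.toMulOne S (@Monoid.toMulOneClass S (@DivInvMonoid.toMonoid S (@Group.toDivInvMonoid S instS)))))
        (g : @MonoidHom (Q j) S _ (@MulOneClass.toMulOne S (@Monoid.toMulOneClass S (@DivInvMonoid.toMonoid S (@Group.toDivInvMonoid S instS))))),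
      Function.Surjective f → Function.Surjective g → False)
    (F : Finset ι) : ∀ y : ∀ i, Q i, ∃ g : Γ, ∀ i ∈ F, φ i g = y i := by
  classical
  induction F using Finset.induction_on with
  | empty => intro y; exact ⟨1, by simp⟩
  | @insert a s ha ih =>
    intro y
    set D : Subgroup Γ := ⨅ i ∈ s, (φ i).ker with hDdef
    have hDmem : ∀ g : Γ, g ∈ D ↔ ∀ i ∈ s, φ i g = 1 := by
      intro g
      simp [hDdef, Subgroup.mem_iInf, MonoidHom.mem_ker]
    have hDnormal : D.Normal := by
      constructor
      intro d hd g
      rw [hDmem] at hd ⊢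
      intro i hi
      simp [_root_.map_mul, hd i hi]
    have hD : ∀ q : Q a, ∃ g ∈ D, φ a g = q := by
      by_contra hcon
      push_neg at hcon
      obtain ⟨q0, hq0⟩ := hcon
      set E : Subgroup (Q a) := D.map (φ a) with hEdef
      have hEne : E ≠ ⊤ := by
        intro h
        obtain ⟨d, hd, hdq⟩ : q0 ∈ E := h ▸ Subgroup.mem_top q0
        exact hq0 d hd hdq
      haveI hEnormal : E.Normal := by
        constructor
        intro e he q
        obtain ⟨d, hd, rfl⟩ := he
        obtain ⟨g, rfl⟩ := hφ a q
        exact ⟨g * d * g⁻¹, hDnormal.conj_mem d hd g, by simp [_root_.map_mul]⟩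
      obtain ⟨q1, hq1⟩ : ∃ q1 : Q a, q1 ∉ E := by
        by_contra h
        push_neg at h
        exact hEne ((Subgroup.eq_top_iff' E).mpr h)
      haveI : Nontrivial (Q a ⧸ E) :=
        ⟨⟨QuotientGroup.mk q1, 1, by simpa [QuotientGroup.eq_one_iff] using hq1⟩⟩
      haveI : Finite (Q a ⧸ E) := Quotient.finite _
      obtain ⟨S, instS, instF, instSimp, σ, hσ⟩ :=
        exists_simple_quotient (Nat.card (Q a ⧸ E)) (Q a ⧸ E) le_rfl
      letI := instS
      letI := instF
      letI := instSimp
      set f₁ : Q a →* S := σ.comp (QuotientGroup.mk' E) with hf₁def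
      have hf₁surj : Function.Surjective f₁ := hσ.comp (QuotientGroup.mk'_surjective E)
      set τ : Γ →* S := f₁.comp (φ a) with hτdef
      have hτsurj : Function.Surjective τ := hf₁surj.comp (hφ a)
      have hτD : ∀ g ∈ D, τ g = 1 := by
        intro g hg
        have hmem : φ a g ∈ E := ⟨g, hg, rfl⟩
        have h1 : QuotientGroup.mk' E (φ a g) = 1 := by
          simpa [QuotientGroup.eq_one_iff] using hmem
        simp [hτdef, hf₁def, MonoidHom.comp_apply, h1]
      have hmain : ∃ i₁ ∈ s, ∃ ψ : Q i₁ →* S, Function.Surjective ψ := by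
        by_contra h2
        push_neg at h2
        have hJ : ∀ i ∈ s, ∀ g : Γ, (∀ j ∈ s, j ≠ i → φ j g = 1) → τ g = 1 := by
          intro i hi
          set J : Subgroup Γ := ⨅ j ∈ s.erase i, (φ j).ker with hJdef
          have hJmem : ∀ g : Γ, g ∈ J ↔ ∀ j ∈ s, j ≠ i → φ j g = 1 := by
            intro g
            simp only [hJdef, Subgroup.mem_iInf, MonoidHom.mem_ker, Finset.mem_erase]
            constructor
            · intro h j hj hne; exact h j ⟨hne, hj⟩
            · rintro h j ⟨hne, hj⟩; exact h j hj hne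
          have hJnormal : J.Normal := by
            constructor
            intro d hd g
            rw [hJmem] at hd ⊢
            intro j hj hne
            simp [_root_.map_mul, hd j hj hne]
          set u : ↥J →* Q i := (φ i).comp J.subtype with hudef
          have husurj : Function.Surjective u := by
            intro qq
            obtain ⟨g, hg⟩ := ih (Function.update (fun j => (1 : Q j)) i qq)
            have hgJ : g ∈ J := by
              rw [hJmem]
              intro j hj hne
              rw [hg j hj, Function.update_of_ne hne]
            refine ⟨⟨g, hgJ⟩, ?_⟩
            have := hg i hi
            simpa [hudef, Function.update_self] using this
          set v : ↥J →* S := τ.comp J.subtype with hvdef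
          have hkv : u.ker ≤ v.ker := by
            intro x hx
            have hxJ := x.2
            rw [hJmem] at hxJ
            have hxD : (x : Γ) ∈ D := by
              rw [hDmem]
              intro j hj
              by_cases hji : j = i
              · subst hji
                simpa [hudef, MonoidHom.mem_ker] using hx
              · exact hxJ j hj hji
            simpa [hvdef, MonoidHom.mem_ker] using hτD x hxD
          obtain ⟨uinv, huinv⟩ := husurj.hasRightInverse
          set ψ : Q i →* S := u.liftOfRightInverse uinv huinv ⟨v, hkv⟩ with hψdef
          have hψu : ∀ x : ↥J, ψ (u x) = v x :=
            fun x => u.liftOfRightInverse_comp_apply uinv huinv ⟨v, hkv⟩ x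
          set R : Subgroup S := J.map τ with hRdef
          have hRnormal : R.Normal := by
            constructor
            intro r hr x
            obtain ⟨jg, hjg, rfl⟩ := hr
            obtain ⟨g', rfl⟩ := hτsurj x
            exact ⟨g' * jg * g'⁻¹, hJnormal.conj_mem jg hjg g', by simp [_root_.map_mul]⟩
          have hRrange : ψ.range = R := by
            ext z
            constructor
            · rintro ⟨q, rfl⟩
              obtain ⟨xJ, rfl⟩ := husurj q
              rw [hψu]
              exact ⟨xJ, xJ.2, rfl⟩
            · rintro ⟨jg, hjg, rfl⟩
              exact ⟨u ⟨jg, hjg⟩, hψu ⟨jg, hjg⟩⟩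
          have hRbot : R = ⊥ := by
            rcases hRnormal.eq_bot_or_eq_top with h | h
            · exact h
            · exfalso
              apply h2 i hi ψ
              rw [← MonoidHom.range_eq_top, hRrange, h]
          intro g hg
          have hgJ : g ∈ J := (hJmem g).mpr hg
          have hmem : τ g ∈ R := ⟨g, hgJ, rfl⟩
          rw [hRbot] at hmem
          simpa using hmem
        have hsub : ∀ t : Finset ι, t ⊆ s →
            ∀ g : Γ, (∀ j ∈ s, j ∉ t → φ j g = 1) → τ g = 1 := by
          intro t
          induction t using Finset.induction_on with
          | empty =>
            intro _ g hg
            exact hτD g ((hDmem g).mpr fun i hi => hg i hi (Finset.notMem_empty i))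
          | @insert b t hb iht =>
            intro hts g hg
            have hbs : b ∈ s := hts (Finset.mem_insert_self b t)
            obtain ⟨h, hh⟩ := ih (Function.update (fun j => (1 : Q j)) b (φ b g))
            have hhJ : ∀ j ∈ s, j ≠ b → φ j h = 1 := by
              intro j hj hne
              rw [hh j hj, Function.update_of_ne hne]
            have hτh : τ h = 1 := hJ b hbs h hhJ
            have hφbh : φ b h = φ b g := by
              have := hh b hbs
              simpa [Function.update_self] using this
            have hkey : τ (g * h⁻¹) = 1 := by
              apply iht ((Finset.subset_insert b t).trans hts)
              intro j hj hjt
              by_cases hjb : j = b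
              · subst hjb
                simp [_root_.map_mul, _root_.map_inv, hφbh]
              · have hnotin : j ∉ insert b t := by
                  simp [Finset.mem_insert, hjb, hjt]
                simp [_root_.map_mul, _root_.map_inv, hg j hj hnotin, hhJ j hj hjb]
            calc τ g = τ (g * h⁻¹) * τ h := by simp [_root_.map_mul]
              _ = 1 := by rw [hkey, hτh, one_mul]
        obtain ⟨x, hx⟩ := exists_ne (1 : S)
        obtain ⟨g, hg⟩ := hτsurj x
        exact hx (hg ▸ hsub s le_rfl g fun j hj hjs => absurd hj hjs)
      obtain ⟨i₁, hi₁, ψ, hψ⟩ := hmain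
      exact hnc i₁ a (by rintro rfl; exact ha hi₁) S instS instF instSimp ψ f₁ hψ hf₁surj
    obtain ⟨g₀, hg₀⟩ := ih y
    obtain ⟨h, hhD, hha⟩ := hD ((φ a g₀)⁻¹ * y a)
    refine ⟨g₀ * h, ?_⟩
    intro i hi
    rcases Finset.mem_insert.mp hi with rfl | his
    · rw [_root_.map_mul, hha, mul_inv_cancel_left]
    · rw [_root_.map_mul, hg₀ i his, (hDmem h).mp hhD i his, mul_one]

/-- A group homomorphism whose kernel contains an open subgroup is continuous for the
discrete topology on the target. -/
theorem continuous_of_open_subgroup_le_ker {H S : Type*} [Group H] [TopologicalSpace H]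
    [ContinuousMul H] [Group S] (f : H →* S) (U : Subgroup H)
    (hU : IsOpen (U : Set H)) (hker : ∀ u ∈ U, f u = 1) :
    @Continuous H S _ ⊥ f := by
  rw [continuous_def]
  intro V _
  rw [isOpen_iff_mem_nhds]
  intro h hh
  rw [mem_nhds_iff]
  refine ⟨(fun z => h * z) '' (U : Set H), ?_, ?_, ?_⟩
  · rintro _ ⟨w, hw, rfl⟩
    show f (h * w) ∈ V
    rw [_root_.map_mul, hker w hw, mul_one]
    exact hh
  · exact (Homeomorph.mulLeft h).isOpenMap _ hU
  · exact ⟨1, U.one_mem, mul_one h⟩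

/-- The abstract form of the theorem, for a closed subgroup of a product of profinite
groups. -/
theorem aux {ι : Type} {A : ι → Type} [∀ i, Group (A i)] [∀ i, TopologicalSpace (A i)]
    [∀ i, IsTopologicalGroup (A i)] [∀ i, CompactSpace (A i)] [∀ i, T2Space (A i)]
    [∀ i, TotallyDisconnectedSpace (A i)]
    (G : Subgroup (∀ i, A i)) (hG : IsClosed (G : Set (∀ i, A i)))
    (hind : ∀ i j : ι, i ≠ j → ∀ (S : Type) (instS : Group S),
      ∀ (_ : Finite S) (_ : @IsSimpleGroup S instS),
        ¬ (@IsContinuousQuotient ↥(G.map (Pi.evalMonoidHom A i)) _ _ S instS ∧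
           @IsContinuousQuotient ↥(G.map (Pi.evalMonoidHom A j)) _ _ S instS)) :
    G = Subgroup.pi Set.univ (fun i => G.map (Pi.evalMonoidHom A i)) := by
  classical
  refine le_antisymm (fun g hg => (Subgroup.mem_pi _).mpr fun i _ => Subgroup.mem_map.mpr ⟨g, hg, rfl⟩) ?_
  intro x hx
  have hx' : ∀ i, x i ∈ G.map (Pi.evalMonoidHom A i) :=
    fun i => (Subgroup.mem_pi _).mp hx i (Set.mem_univ i)
  haveI hKc : ∀ i, CompactSpace ↥(G.map (Pi.evalMonoidHom A i)) := by
    intro i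
    have hGc : IsCompact (G : Set (∀ i, A i)) := hG.isCompact
    have h2 : IsCompact ((fun g : ∀ i, A i => g i) '' (G : Set (∀ i, A i))) :=
      hGc.image (continuous_apply i)
    have h3 : ((G.map (Pi.evalMonoidHom A i) : Subgroup (A i)) : Set (A i)) =
        (fun g : ∀ i, A i => g i) '' (G : Set (∀ i, A i)) := Subgroup.coe_map _ _
    exact isCompact_iff_compactSpace.mp (h3 ▸ h2)
  show x ∈ (G : Set (∀ i, A i))
  rw [← hG.closure_eq]
  rw [mem_closure_iff]
  intro o ho hxo
  obtain ⟨I, u, hu, husub⟩ := isOpen_pi_iff.mp ho x hxo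
  have hNex : ∀ i, ∃ N : OpenNormalSubgroup ↥(G.map (Pi.evalMonoidHom A i)), i ∈ I →
      ∀ k : ↥(G.map (Pi.evalMonoidHom A i)),
        (⟨x i, hx' i⟩ : ↥(G.map (Pi.evalMonoidHom A i)))⁻¹ * k ∈ N.toSubgroup →
        (k : A i) ∈ u i := by
    intro i
    by_cases hi : i ∈ I
    · set xl : ↥(G.map (Pi.evalMonoidHom A i)) := ⟨x i, hx' i⟩ with hxl
      have hV : IsOpen (Subtype.val ⁻¹' (u i) : Set ↥(G.map (Pi.evalMonoidHom A i))) :=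
        (hu i hi).1.preimage continuous_subtype_val
      have hW : IsOpen ((fun z => xl * z) ⁻¹' (Subtype.val ⁻¹' (u i))) :=
        hV.preimage (continuous_mul_left xl)
      have h1W : (1 : ↥(G.map (Pi.evalMonoidHom A i))) ∈
          (fun z => xl * z) ⁻¹' (Subtype.val ⁻¹' (u i)) := by
        show ((xl * 1 : ↥(G.map (Pi.evalMonoidHom A i))) : A i) ∈ u i
        simpa [hxl] using (hu i hi).2
      obtain ⟨C, ⟨h1C, hCclopen⟩, hCW⟩ :=
        (nhds_basis_clopen (1 : ↥(G.map (Pi.evalMonoidHom A i)))).mem_iff.mp (hW.mem_nhds h1W)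
      obtain ⟨N, hN⟩ :=
        IsTopologicalGroup.exist_openNormalSubgroup_sub_clopen_nhds_of_one hCclopen h1C
      refine ⟨N, fun _ k hk => ?_⟩
      have hmem : xl⁻¹ * k ∈ (fun z => xl * z) ⁻¹' (Subtype.val ⁻¹' (u i)) := hCW (hN hk)
      simpa [hxl] using hmem
    · exact ⟨⟨⟨⊤, isOpen_univ⟩, ⟨fun n _ g => Subgroup.mem_top _⟩⟩, fun h => absurd h hi⟩
  choose N hN using hNex
  haveI hQfin : ∀ i, Finite (↥(G.map (Pi.evalMonoidHom A i)) ⧸ (N i).toSubgroup) :=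
    fun i => Subgroup.quotient_finite_of_isOpen _ (N i).toOpenSubgroup.isOpen
  have hnc : ∀ i j : ι, i ≠ j → ∀ (S : Type) (instS : Group S),
      ∀ (_ : Finite S) (_ : @IsSimpleGroup S instS)
        (f : @MonoidHom (↥(G.map (Pi.evalMonoidHom A i)) ⧸ (N i).toSubgroup) S _
          (@MulOneClass.toMulOne S (@Monoid.toMulOneClass S (@DivInvMonoid.toMonoid S (@Group.toDivInvMonoid S instS)))))
        (g : @MonoidHom (↥(G.map (Pi.evalMonoidHom A j)) ⧸ (N j).toSubgroup) S _
          (@MulOneClass.toMulOne S (@Monoid.toMulOneClass S (@DivInvMonoid.toMonoid S (@Group.toDivInvMonoid S instS))))),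
      Function.Surjective f → Function.Surjective g → False := by
    intro i j hij S instS instF instSimp f g hf hg
    letI := instS
    refine hind i j hij S instS instF instSimp ⟨⟨f.comp (QuotientGroup.mk' _), ?_, ?_⟩,
      ⟨g.comp (QuotientGroup.mk' _), ?_, ?_⟩⟩
    · exact hf.comp (QuotientGroup.mk'_surjective _)
    · refine continuous_of_open_subgroup_le_ker _ (N i).toSubgroup
        (N i).toOpenSubgroup.isOpen fun w hw => ?_
      have h1 : QuotientGroup.mk' (N i).toSubgroup w = 1 := by
        simpa [QuotientGroup.eq_one_iff] using hw
      simp [MonoidHom.comp_apply, h1]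
    · exact hg.comp (QuotientGroup.mk'_surjective _)
    · refine continuous_of_open_subgroup_le_ker _ (N j).toSubgroup
        (N j).toOpenSubgroup.isOpen fun w hw => ?_
      have h1 : QuotientGroup.mk' (N j).toSubgroup w = 1 := by
        simpa [QuotientGroup.eq_one_iff] using hw
      simp [MonoidHom.comp_apply, h1]
  obtain ⟨g, hg⟩ := key
    (Q := fun i => ↥(G.map (Pi.evalMonoidHom A i)) ⧸ (N i).toSubgroup)
    (φ := fun i => (QuotientGroup.mk' _).comp ((Pi.evalMonoidHom A i).subgroupMap G))
    (fun i => (QuotientGroup.mk'_surjective _).comp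
      ((Pi.evalMonoidHom A i).subgroupMap_surjective G))
    hnc I (fun i => QuotientGroup.mk ⟨x i, hx' i⟩)
  refine ⟨g, husub ?_, g.2⟩
  rw [Set.mem_pi]
  intro i hiI
  have h1 := hg i hiI
  have h2 : ((Pi.evalMonoidHom A i).subgroupMap G g)⁻¹ * (⟨x i, hx' i⟩ :
      ↥(G.map (Pi.evalMonoidHom A i))) ∈ (N i).toSubgroup := by
    rw [← QuotientGroup.eq]
    exact h1
  have h3 : (⟨x i, hx' i⟩ : ↥(G.map (Pi.evalMonoidHom A i)))⁻¹ *
      ((Pi.evalMonoidHom A i).subgroupMap G g) ∈ (N i).toSubgroup := by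
    have := ((N i).toSubgroup).inv_mem h2
    simpa using this
  exact hN i hiI _ h3

/-- If a closed subgroup `G` of `∏_{ℓ ∈ L} GL n ℤ_[ℓ]` is group-theoretically independent
(no finite simple group is a common continuous finite simple quotient of two distinct
projections `pr_ℓ(G)`), then `G` is independent: `G = ∏_{ℓ ∈ L} pr_ℓ(G)`. -/
theorem stmt_2 (n : ℕ) (L : Set Nat.Primes)
    (G : Subgroup (Π ℓ : L, GL (Fin n) ℤ_[((ℓ : Nat.Primes) : ℕ)]))
    (hG : IsClosed (G : Set (Π ℓ : L, GL (Fin n) ℤ_[((ℓ : Nat.Primes) : ℕ)])))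
    (hind : ∀ ℓ₁ ℓ₂ : L, ℓ₁ ≠ ℓ₂ →
      ∀ (S : Type) [Group S] [Finite S] [IsSimpleGroup S],
        ¬ (IsContinuousQuotient (G.map (Pi.evalMonoidHom _ ℓ₁)) S ∧
           IsContinuousQuotient (G.map (Pi.evalMonoidHom _ ℓ₂)) S)) :
    G = Subgroup.pi Set.univ (fun ℓ : L => G.map (Pi.evalMonoidHom _ ℓ)) := by
  exact aux G hG (fun i j hij S instS instF instSimp => by
    letI := instS; letI := instF; letI := instSimp
    exact hind i j hij S)
end

section
/- Let n be a natural number, L a set of primes, and G a closed subgroup of the product ∏_{ℓ∈L} GL_n(ℤ_ℓ). If G satisfies condition (+) potentially, i.e. G has an open subgroup H satisfying condition (+), then G has an open normal subgroup which satisfies condition (+). -/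
open Matrix

/-- A profinite group `H` is generated by its `ℓ`-Sylow subgroups, expressed equivalently as:
every open normal subgroup of `H` whose index is finite and coprime to `ℓ` equals `H`. -/
def GenBySylow (H : Type*) [Group H] [TopologicalSpace H] (ℓ : ℕ) : Prop :=
  ∀ N : Subgroup H, N.Normal → IsOpen (N : Set H) → N.index ≠ 0 →
    Nat.Coprime N.index ℓ → N = ⊤

/-- A subgroup `H` of `∏_{ℓ ∈ L} GL n ℤ_[ℓ]` satisfies condition (+) if for all but finitely
many `ℓ ∈ L` the projection `pr_ℓ(H)` is generated by its `ℓ`-Sylow subgroups. -/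
def CondPlus (n : ℕ) (L : Set Nat.Primes)
    (H : Subgroup (Π ℓ : L, GL (Fin n) ℤ_[((ℓ : Nat.Primes) : ℕ)])) : Prop :=
  {ℓ : L | ¬ GenBySylow (H.map (Pi.evalMonoidHom _ ℓ)) ((ℓ : Nat.Primes) : ℕ)}.Finite

instance MulOpposite.instCompactSpace' {M : Type*} [TopologicalSpace M] [CompactSpace M] :
    CompactSpace Mᵐᵒᵖ :=
  MulOpposite.opHomeomorph.compactSpace

theorem Units.compactSpace' {M : Type*} [Monoid M] [TopologicalSpace M] [ContinuousMul M]
    [T2Space M] [CompactSpace M] : CompactSpace Mˣ := by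
  refine Topology.IsClosedEmbedding.compactSpace (f := Units.embedProduct M)
    ⟨Units.isEmbedding_embedProduct, ?_⟩
  have h : Set.range (Units.embedProduct M) =
      {x : M × Mᵐᵒᵖ | x.1 * x.2.unop = 1 ∧ x.2.unop * x.1 = 1} := by
    ext x
    constructor
    · rintro ⟨u, rfl⟩
      exact ⟨u.mul_inv, u.inv_mul⟩
    · rintro ⟨h1, h2⟩
      exact ⟨⟨x.1, x.2.unop, h1, h2⟩, by simp [Units.embedProduct]⟩
  rw [h]
  exact (isClosed_eq (continuous_fst.mul (MulOpposite.continuous_unop.comp continuous_snd))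
      continuous_const).inter
    (isClosed_eq ((MulOpposite.continuous_unop.comp continuous_snd).mul continuous_fst)
      continuous_const)

instance Matrix.instCompactSpace' {m' n' R : Type*} [TopologicalSpace R] [CompactSpace R] :
    CompactSpace (Matrix m' n' R) := inferInstanceAs (CompactSpace (m' → n' → R))

instance (p : Nat.Primes) (n : ℕ) : CompactSpace (GL (Fin n) ℤ_[(p : ℕ)]) :=
  Units.compactSpace'

/-- If a closed subgroup `G` of `∏_{ℓ ∈ L} GL n ℤ_[ℓ]` satisfies condition (+) potentially,
i.e. `G` has an open subgroup satisfying condition (+), then `G` has an open *normal*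
subgroup satisfying condition (+). -/
theorem stmt_4 (n : ℕ) (L : Set Nat.Primes)
    (G : Subgroup (Π ℓ : L, GL (Fin n) ℤ_[((ℓ : Nat.Primes) : ℕ)]))
    (hG : IsClosed (G : Set (Π ℓ : L, GL (Fin n) ℤ_[((ℓ : Nat.Primes) : ℕ)])))
    (hpot : ∃ H : Subgroup (Π ℓ : L, GL (Fin n) ℤ_[((ℓ : Nat.Primes) : ℕ)]),
      H ≤ G ∧ IsOpen ((H.subgroupOf G : Subgroup G) : Set G) ∧ CondPlus n L H) :
    ∃ N : Subgroup (Π ℓ : L, GL (Fin n) ℤ_[((ℓ : Nat.Primes) : ℕ)]),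
      N ≤ G ∧ IsOpen ((N.subgroupOf G : Subgroup G) : Set G) ∧
      (N.subgroupOf G).Normal ∧ CondPlus n L N := by
  classical
  obtain ⟨H, hHG, hHopen, hHplus⟩ := hpot
  haveI : CompactSpace G := isCompact_iff_compactSpace.mp hG.isCompact
  haveI : Finite (G ⧸ (H.subgroupOf G)) := Subgroup.quotient_finite_of_isOpen _ hHopen
  haveI hfi : (H.subgroupOf G).FiniteIndex := Subgroup.finiteIndex_of_finite_quotient
  set C : Subgroup G := (H.subgroupOf G).normalCore with hCdef
  haveI : C.FiniteIndex := Subgroup.finiteIndex_normalCore _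
  have hCclosed : IsClosed (C : Set G) :=
    Subgroup.normalCore_isClosed _ (Subgroup.isClosed_of_isOpen _ hHopen)
  have hCopen : IsOpen (C : Set G) := Subgroup.isOpen_of_isClosed_of_finiteIndex _ hCclosed
  set m : ℕ := (C.subgroupOf (H.subgroupOf G)).index with hmdef
  have hmne : m ≠ 0 := by
    intro h0
    have hrel := Subgroup.relIndex_mul_index (Subgroup.normalCore_le (H.subgroupOf G))
    have : C.index = 0 := by
      rw [← hrel]
      have : C.relIndex (H.subgroupOf G) = m := rfl
      rw [this, h0, zero_mul]
    exact Subgroup.FiniteIndex.index_ne_zero this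
  have hNG : (C.map G.subtype).subgroupOf G = C :=
    Subgroup.comap_map_eq_self_of_injective G.subtype_injective C
  have key : ∀ ℓ : L, GenBySylow (H.map (Pi.evalMonoidHom _ ℓ)) ((ℓ : Nat.Primes) : ℕ) →
      m < ((ℓ : Nat.Primes) : ℕ) →
      (C.map G.subtype).map (Pi.evalMonoidHom _ ℓ) = H.map (Pi.evalMonoidHom _ ℓ) := by
    intro ℓ hgen hlt
    set φ : G →* GL (Fin n) ℤ_[((ℓ : Nat.Primes) : ℕ)] :=
      (Pi.evalMonoidHom _ ℓ).comp G.subtype with hφdef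
    have hφcont : Continuous φ := (continuous_apply ℓ).comp continuous_subtype_val
    have hA : H.map (Pi.evalMonoidHom _ ℓ) = (H.subgroupOf G).map φ := by
      rw [hφdef, ← Subgroup.map_map, Subgroup.subgroupOf_map_subtype, inf_eq_left.mpr hHG]
    have hB : (C.map G.subtype).map (Pi.evalMonoidHom _ ℓ) = C.map φ := by
      rw [hφdef, ← Subgroup.map_map]
    rw [hA] at hgen
    rw [hA, hB]
    set A : Subgroup (GL (Fin n) ℤ_[((ℓ : Nat.Primes) : ℕ)]) := (H.subgroupOf G).map φ with hAdef
    set B : Subgroup (GL (Fin n) ℤ_[((ℓ : Nat.Primes) : ℕ)]) := C.map φ with hBdef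
    have hBA : B ≤ A := Subgroup.map_mono (Subgroup.normalCore_le _)
    set P : Subgroup A := B.subgroupOf A with hPdef
    have hmem : ∀ x : H.subgroupOf G, φ x ∈ A := fun x => ⟨x, x.2, rfl⟩
    set q : (H.subgroupOf G) →* A :=
      (φ.comp (H.subgroupOf G).subtype).codRestrict A (fun x => hmem x) with hqdef
    have hqsurj : Function.Surjective q := by
      rintro ⟨a, ha⟩
      obtain ⟨g, hg, rfl⟩ := ha
      exact ⟨⟨g, hg⟩, rfl⟩
    have hPmap : (C.subgroupOf (H.subgroupOf G)).map q = P := by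
      ext a
      simp only [Subgroup.mem_map, hPdef, Subgroup.mem_subgroupOf]
      constructor
      · rintro ⟨x, hx, rfl⟩
        exact ⟨(x : G), hx, rfl⟩
      · rintro ⟨c, hc, hca⟩
        exact ⟨⟨c, Subgroup.normalCore_le _ hc⟩, hc, Subtype.ext hca⟩
    have hPdvd : P.index ∣ m := by
      rw [← hPmap]
      exact Subgroup.index_map_dvd _ hqsurj
    have hPne : P.index ≠ 0 := by
      intro h0
      rw [h0] at hPdvd
      exact hmne (Nat.eq_zero_of_zero_dvd hPdvd)
    haveI : P.FiniteIndex := ⟨hPne⟩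
    have hPnormal : P.Normal := by
      constructor
      rintro ⟨x, hxA⟩ hx ⟨g, hgA⟩
      rw [Subgroup.mem_subgroupOf] at hx ⊢
      obtain ⟨c, hc, rfl⟩ := hx
      obtain ⟨h, hh, rfl⟩ := hgA
      show φ h * φ c * (φ h)⁻¹ ∈ B
      refine ⟨h * c * h⁻¹, Subgroup.Normal.conj_mem (Subgroup.normalCore_normal _) c hc h, ?_⟩
      rw [φ.map_mul, φ.map_mul, φ.map_inv]
    have hPclosed : IsClosed (P : Set A) := by
      have hBcompact : IsCompact (B : Set (GL (Fin n) ℤ_[((ℓ : Nat.Primes) : ℕ)])) := by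
        rw [hBdef, Subgroup.coe_map]
        exact (hCclosed.isCompact).image hφcont
      have hBc := hBcompact.isClosed
      have : (P : Set A) = (Subtype.val : A → _) ⁻¹' (B : Set _) := rfl
      rw [this]
      exact hBc.preimage continuous_subtype_val
    have hPopen : IsOpen (P : Set A) := Subgroup.isOpen_of_isClosed_of_finiteIndex P hPclosed
    have hcop : Nat.Coprime P.index ((ℓ : Nat.Primes) : ℕ) := by
      have hp : Nat.Prime ((ℓ : Nat.Primes) : ℕ) := (ℓ : Nat.Primes).2
      refine Nat.Coprime.symm ((Nat.Prime.coprime_iff_not_dvd hp).mpr ?_)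
      intro hdvd
      have h1 : P.index ≤ m := Nat.le_of_dvd (Nat.pos_of_ne_zero hmne) hPdvd
      have h2 := Nat.le_of_dvd (Nat.pos_of_ne_zero hPne) hdvd
      omega
    have htop := hgen P hPnormal hPopen hPne hcop
    have hAB : A ≤ B := Subgroup.subgroupOf_eq_top.mp htop
    exact le_antisymm hBA hAB
  refine ⟨C.map G.subtype, Subgroup.map_subtype_le C, ?_, ?_, ?_⟩
  · rw [hNG]; exact hCopen
  · rw [hNG]; infer_instance
  · have hsub : {ℓ : L | ¬ GenBySylow ((C.map G.subtype).map (Pi.evalMonoidHom _ ℓ))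
        ((ℓ : Nat.Primes) : ℕ)} ⊆
        {ℓ : L | ¬ GenBySylow (H.map (Pi.evalMonoidHom _ ℓ)) ((ℓ : Nat.Primes) : ℕ)} ∪
        {ℓ : L | ((ℓ : Nat.Primes) : ℕ) ≤ m} := by
      intro ℓ hℓ
      by_contra hcon
      simp only [Set.mem_union, Set.mem_setOf_eq, not_or, not_not, not_le] at hcon
      obtain ⟨hgen, hlt⟩ := hcon
      exact hℓ (by rw [key ℓ hgen hlt]; exact hgen)
    refine Set.Finite.subset (Set.Finite.union hHplus ?_) hsub
    have heq : {ℓ : L | ((ℓ : Nat.Primes) : ℕ) ≤ m} =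
        (fun ℓ : L => ((ℓ : Nat.Primes) : ℕ)) ⁻¹' (Set.Iic m) := rfl
    rw [heq]
    refine (Set.finite_Iic m).preimage (Function.Injective.injOn ?_)
    intro a b hab
    exact Subtype.ext (Subtype.ext hab)
end
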